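/- Let F be as in the context. For every N ∈ ℕ there is a constant C_N such that for all w ∈ ℂ with Im w ≥ 0 and |w| ≥ 1, |F(w) − Σ_{j=0}^{N} c_j · w^{−j}| ≤ C_N · |w|^{−(N+1)}, where c_j = binom(−1/2, j) · Γ(j + 1/2) · (i/2)^j and binom(−1/2, j) is the generalized binomial coefficient. (In particular c₀ = Γ(1/2) = √π.) -/

import Mathlib

open scoped Real
open MeasureTheory Complex Finset

noncomputable section

/-- generalized binomial coefficient `binom(α, j)` as a complex number, `α` real. -/
def bcoef (α : ℝ) (j : ℕ) : ℂ :=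
  (∏ i ∈ Finset.range j, ((α : ℂ) - (i : ℂ))) / (Nat.factorial j : ℂ)

/-- constant in the remainder bound. -/
def Kc : ℕ → ℝ → ℝ
  | 0, a => |a|
  | (N+1), a => |a| * Kc N (a - 1)

lemma Kc_nonneg : ∀ N a, 0 ≤ Kc N a
  | 0, a => abs_nonneg a
  | (N+1), a => mul_nonneg (abs_nonneg a) (Kc_nonneg N (a-1))

lemma bcoef_zero (α : ℝ) : bcoef α 0 = 1 := by simp [bcoef]

lemma bcoef_succ (α : ℝ) (j : ℕ) :
    (α : ℂ) * bcoef (α - 1) j / ((j : ℂ) + 1) = bcoef α (j + 1) := by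
  have h1 : ∏ i ∈ Finset.range (j+1), ((α : ℂ) - (i : ℂ))
      = (∏ i ∈ Finset.range j, (((α - 1 : ℝ) : ℂ) - (i : ℂ))) * (α : ℂ) := by
    rw [Finset.prod_range_succ']
    congr 1
    · exact Finset.prod_congr rfl fun i _ => by push_cast; ring
    · simp
  have hj : ((j : ℂ) + 1) ≠ 0 := Nat.cast_add_one_ne_zero j
  have hf : (Nat.factorial j : ℂ) ≠ 0 := by
    exact_mod_cast Nat.cast_ne_zero.mpr (Nat.factorial_ne_zero j)
  simp only [bcoef, h1, Nat.factorial_succ]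
  push_cast
  field_simp

lemma re_one_add (u : ℂ) (hu : 0 ≤ u.re) (t : ℝ) (ht : 0 ≤ t) :
    1 ≤ (1 + (t : ℂ) * u).re := by
  simp only [Complex.add_re, Complex.one_re, Complex.mul_re, Complex.ofReal_re,
    Complex.ofReal_im]
  nlinarith

lemma slit_one_add (u : ℂ) (hu : 0 ≤ u.re) (t : ℝ) (ht : 0 ≤ t) :
    (1 + (t : ℂ) * u) ∈ Complex.slitPlane :=
  Complex.mem_slitPlane_iff.mpr (Or.inl (by linarith [re_one_add u hu t ht]))

lemma cont_cpow (u : ℂ) (hu : 0 ≤ u.re) (c : ℂ) :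
    ContinuousOn (fun t : ℝ => (1 + (t : ℂ) * u) ^ c) (Set.uIcc 0 1) := by
  apply ContinuousOn.cpow_const
  · exact (continuous_const.add (Complex.continuous_ofReal.mul continuous_const)).continuousOn
  · intro t ht
    rw [Set.uIcc_of_le (by norm_num : (0:ℝ) ≤ 1)] at ht
    exact slit_one_add u hu t ht.1

lemma norm_cpow_le_one (u : ℂ) (hu : 0 ≤ u.re) (t : ℝ) (ht : 0 ≤ t) (β : ℝ) (hβ : β ≤ 0) :
    ‖(1 + (t : ℂ) * u) ^ ((β : ℝ) : ℂ)‖ ≤ 1 := by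
  rw [Complex.norm_cpow_real]
  apply Real.rpow_le_one_of_one_le_of_nonpos _ hβ
  calc (1:ℝ) ≤ (1 + (t : ℂ) * u).re := re_one_add u hu t ht
    _ ≤ ‖1 + (t : ℂ) * u‖ := Complex.re_le_norm _

/-- FTC identity. -/
lemma ftc (α : ℝ) (u : ℂ) (hu : 0 ≤ u.re) :
    (1 + u) ^ ((α : ℝ) : ℂ)
      = 1 + (α : ℂ) * u * ∫ t in (0:ℝ)..1, (1 + (t : ℂ) * u) ^ (((α : ℝ) : ℂ) - 1) := by
  have hderiv : ∀ t ∈ Set.uIcc (0:ℝ) 1,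
      HasDerivAt (fun t : ℝ => (1 + (t : ℂ) * u) ^ ((α : ℝ) : ℂ))
        (((α : ℝ) : ℂ) * (1 + (t : ℂ) * u) ^ (((α : ℝ) : ℂ) - 1) * u) t := by
    intro t ht
    rw [Set.uIcc_of_le (by norm_num : (0:ℝ) ≤ 1)] at ht
    have hbase : HasDerivAt (fun t : ℝ => 1 + (t : ℂ) * u) u t := by
      simpa using (Complex.ofRealCLM.hasDerivAt.mul_const u).const_add (1 : ℂ)
    have hc := ((Complex.hasStrictDerivAt_cpow_const (c := ((α : ℝ) : ℂ))
      (slit_one_add u hu t ht.1)).hasDerivAt).comp t hbase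
    simpa [Function.comp_def, mul_assoc] using hc
  have hint : IntervalIntegrable
      (fun t : ℝ => ((α : ℝ) : ℂ) * (1 + (t : ℂ) * u) ^ (((α : ℝ) : ℂ) - 1) * u)
      volume 0 1 :=
    ((continuousOn_const.mul (cont_cpow u hu _)).mul continuousOn_const).intervalIntegrable
  have h := intervalIntegral.integral_eq_sub_of_hasDerivAt hderiv hint
  simp only [Complex.ofReal_zero, Complex.ofReal_one, zero_mul, one_mul, add_zero,
    Complex.one_cpow] at h
  have h2 : ∫ t in (0:ℝ)..1, ((α : ℝ) : ℂ) * (1 + (t : ℂ) * u) ^ (((α : ℝ) : ℂ) - 1) * u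
      = (α : ℂ) * u * ∫ t in (0:ℝ)..1, (1 + (t : ℂ) * u) ^ (((α : ℝ) : ℂ) - 1) := by
    rw [← intervalIntegral.integral_const_mul]
    congr 1; funext t; ring
  rw [h2] at h
  linear_combination -h

/-- Taylor remainder bound for `(1+u)^α`, `α ≤ 0`, `Re u ≥ 0`. -/
lemma rem_bound : ∀ (N : ℕ) (α : ℝ), α ≤ 0 → ∀ u : ℂ, 0 ≤ u.re →
    ‖(1 + u) ^ ((α : ℝ) : ℂ) - ∑ j ∈ Finset.range (N+1), bcoef α j * u ^ j‖
      ≤ Kc N α * ‖u‖ ^ (N+1) := by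
  intro N
  induction N with
  | zero =>
    intro α hα u hu
    have h01 : ∑ j ∈ Finset.range (0+1), bcoef α j * u ^ j = 1 := by simp [bcoef_zero]
    rw [h01, ftc α u hu, add_sub_cancel_left]
    have hb : ‖∫ t in (0:ℝ)..1, (1 + (t : ℂ) * u) ^ (((α : ℝ) : ℂ) - 1)‖ ≤ 1 * |1 - 0| := by
      apply intervalIntegral.norm_integral_le_of_norm_le_const
      intro t ht
      rw [Set.uIoc_of_le (by norm_num : (0:ℝ) ≤ 1)] at ht
      have : (((α : ℝ) : ℂ) - 1) = (((α - 1 : ℝ)) : ℂ) := by push_cast; ring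
      rw [this]
      exact norm_cpow_le_one u hu t ht.1.le (α - 1) (by linarith)
    rw [norm_mul, norm_mul, Complex.norm_real, Real.norm_eq_abs]
    norm_num at hb
    calc |α| * ‖u‖ * ‖∫ t in (0:ℝ)..1, (1 + (t : ℂ) * u) ^ (((α : ℝ) : ℂ) - 1)‖
        ≤ |α| * ‖u‖ * 1 :=
          mul_le_mul_of_nonneg_left hb (mul_nonneg (abs_nonneg _) (norm_nonneg _))
      _ = Kc 0 α * ‖u‖ ^ (0+1) := by simp [Kc]
  | succ N ih =>
    intro α hα u hu
    set R : ℝ → ℂ := fun t =>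
      (1 + (t : ℂ) * u) ^ (((α : ℝ) : ℂ) - 1)
        - ∑ j ∈ Finset.range (N+1), bcoef (α - 1) j * ((t : ℂ) * u) ^ j with hR
    have hcast : (((α : ℝ) : ℂ) - 1) = (((α - 1 : ℝ)) : ℂ) := by push_cast; ring
    have hcontR : ContinuousOn R (Set.uIcc 0 1) := by
      apply (cont_cpow u hu _).sub
      apply continuousOn_finset_sum
      intro j _
      exact (continuous_const.mul
        ((Complex.continuous_ofReal.mul continuous_const).pow j)).continuousOn
    have hintR : IntervalIntegrable R volume 0 1 := hcontR.intervalIntegrable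
    have hintP : ∀ j : ℕ, IntervalIntegrable
        (fun t : ℝ => bcoef (α - 1) j * ((t : ℂ) * u) ^ j) volume 0 1 := fun j =>
      (continuous_const.mul
        ((Complex.continuous_ofReal.mul continuous_const).pow j)).intervalIntegrable 0 1
    -- value of the polynomial integrals
    have hpoly : ∀ j : ℕ, (∫ t in (0:ℝ)..1, bcoef (α - 1) j * ((t : ℂ) * u) ^ j)
        = bcoef (α - 1) j * u ^ j / ((j : ℂ) + 1) := by
      intro j
      have : (fun t : ℝ => bcoef (α - 1) j * ((t : ℂ) * u) ^ j)
          = fun t : ℝ => (bcoef (α - 1) j * u ^ j) * (((t ^ j : ℝ)) : ℂ) := by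
        funext t; push_cast; ring
      rw [this, intervalIntegral.integral_const_mul, intervalIntegral.integral_ofReal,
        integral_pow]
      push_cast
      ring
    have hsplit : (∫ t in (0:ℝ)..1, (1 + (t : ℂ) * u) ^ (((α : ℝ) : ℂ) - 1))
        = (∑ j ∈ Finset.range (N+1), bcoef (α - 1) j * u ^ j / ((j : ℂ) + 1))
          + ∫ t in (0:ℝ)..1, R t := by
      have hdecomp : (fun t : ℝ => (1 + (t : ℂ) * u) ^ (((α : ℝ) : ℂ) - 1))
          = fun t : ℝ => (∑ j ∈ Finset.range (N+1), bcoef (α - 1) j * ((t : ℂ) * u) ^ j)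
            + R t := by
        funext t; simp [hR]
      have hintS : IntervalIntegrable
          (fun t : ℝ => ∑ j ∈ Finset.range (N+1), bcoef (α - 1) j * ((t : ℂ) * u) ^ j)
          volume 0 1 := by
        apply ContinuousOn.intervalIntegrable
        apply continuousOn_finset_sum
        intro j _
        exact (continuous_const.mul
          ((Complex.continuous_ofReal.mul continuous_const).pow j)).continuousOn
      rw [hdecomp, intervalIntegral.integral_add hintS hintR,
        intervalIntegral.integral_finset_sum (fun j _ => hintP j)]
      congr 1
      exact Finset.sum_congr rfl fun j _ => hpoly j
    have key : (1 + u) ^ ((α : ℝ) : ℂ) - ∑ j ∈ Finset.range (N+1+1), bcoef α j * u ^ j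
        = (α : ℂ) * u * ∫ t in (0:ℝ)..1, R t := by
      have hsum : (α : ℂ) * u * (∑ j ∈ Finset.range (N+1), bcoef (α - 1) j * u ^ j / ((j : ℂ) + 1))
          = ∑ j ∈ Finset.range (N+1), bcoef α (j+1) * u ^ (j+1) := by
        rw [Finset.mul_sum]
        apply Finset.sum_congr rfl
        intro j _
        rw [← bcoef_succ α j]
        ring
      rw [Finset.sum_range_succ', ftc α u hu, hsplit]
      simp only [bcoef_zero, pow_zero, mul_one]
      rw [mul_add, hsum]
      ring
    rw [key]
    have hbR : ‖∫ t in (0:ℝ)..1, R t‖ ≤ (Kc N (α-1) * ‖u‖ ^ (N+1)) * |1 - 0| := by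
      apply intervalIntegral.norm_integral_le_of_norm_le_const
      intro t ht
      rw [Set.uIoc_of_le (by norm_num : (0:ℝ) ≤ 1)] at ht
      have h1 := ih (α - 1) (by linarith) ((t : ℂ) * u)
        (by simp only [Complex.mul_re, Complex.ofReal_re, Complex.ofReal_im]; nlinarith [ht.1.le])
      rw [← hcast] at h1
      have h2 : ‖(t : ℂ) * u‖ ^ (N+1) ≤ ‖u‖ ^ (N+1) := by
        apply pow_le_pow_left₀ (norm_nonneg _)
        rw [norm_mul, Complex.norm_real, Real.norm_eq_abs, _root_.abs_of_nonneg ht.1.le]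
        nlinarith [norm_nonneg u, ht.1.le, ht.2]
      calc ‖R t‖ ≤ Kc N (α-1) * ‖(t : ℂ) * u‖ ^ (N+1) := h1
        _ ≤ Kc N (α-1) * ‖u‖ ^ (N+1) := by
            exact mul_le_mul_of_nonneg_left h2 (Kc_nonneg N (α-1))
    rw [norm_mul, norm_mul, Complex.norm_real, Real.norm_eq_abs]
    norm_num at hbR
    calc |α| * ‖u‖ * ‖∫ t in (0:ℝ)..1, R t‖
        ≤ |α| * ‖u‖ * (Kc N (α-1) * ‖u‖ ^ (N+1)) :=
          mul_le_mul_of_nonneg_left hbR (mul_nonneg (abs_nonneg _) (norm_nonneg _))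
      _ = Kc (N+1) α * ‖u‖ ^ (N+1+1) := by simp only [Kc]; ring

lemma norm_cpow_le_one' (z : ℂ) (hz : 1 ≤ z.re) (β : ℝ) (hβ : β ≤ 0) :
    ‖z ^ ((β : ℝ) : ℂ)‖ ≤ 1 := by
  rw [Complex.norm_cpow_real]
  apply Real.rpow_le_one_of_one_le_of_nonpos _ hβ
  calc (1:ℝ) ≤ z.re := hz
    _ ≤ ‖z‖ := Complex.re_le_norm _

lemma integral_ofReal'' {X : Type*} [MeasurableSpace X] {μ : MeasureTheory.Measure X}
    {f : X → ℝ} : ∫ x, ((f x : ℝ) : ℂ) ∂μ = ((∫ x, f x ∂μ : ℝ) : ℂ) :=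
  integral_ofReal

theorem stmt_6
    (F : ℂ → ℂ)
    (hF : ∀ w : ℂ, F w = ∫ s in Set.Ioi (0:ℝ),
        (Real.exp (-s) : ℂ) * ((s ^ (-(1/2) : ℝ) : ℝ) : ℂ) *
          (1 + Complex.I * (s : ℂ) / (2 * w)) ^ (-(1/2) : ℂ))
    (c : ℕ → ℂ)
    (hc : ∀ j : ℕ, c j =
        ((∏ i ∈ Finset.range j, ((-(1/2) : ℂ) - (i : ℂ))) / (Nat.factorial j : ℂ)) *
          Complex.Gamma ((j : ℂ) + 1/2) * (Complex.I / 2) ^ j) :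
    ∀ N : ℕ, ∃ C : ℝ, ∀ w : ℂ, 0 ≤ w.im → 1 ≤ ‖w‖ →
      ‖F w - ∑ j ∈ Finset.range (N + 1), c j * w ^ (-(j : ℤ))‖
        ≤ C * ‖w‖ ^ (-(N : ℤ) - 1) := by
  intro N
  refine ⟨Kc N (-(1/2)) * Real.Gamma ((N:ℝ) + 3/2) / 2 ^ (N+1), ?_⟩
  intro w him hw
  have hwpos : (0:ℝ) < ‖w‖ := lt_of_lt_of_le one_pos hw
  have hw0 : w ≠ 0 := by simpa using norm_pos_iff.mp hwpos
  have hgamma : ∀ r : ℝ, 0 < r →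
      MeasureTheory.IntegrableOn (fun s : ℝ => Real.exp (-s) * s ^ (r - 1)) (Set.Ioi 0) :=
    fun r hr => Real.GammaIntegral_convergent hr
  -- notation
  have hure : ∀ s : ℝ, 0 ≤ s → 0 ≤ (Complex.I * (s:ℂ) / (2*w)).re := by
    intro s hs
    rw [Complex.div_re]
    apply add_nonneg
    · apply div_nonneg _ (Complex.normSq_nonneg _)
      simp [Complex.mul_re]
    · apply div_nonneg _ (Complex.normSq_nonneg _)
      simp only [Complex.mul_im, Complex.mul_re, Complex.I_re, Complex.I_im,
        Complex.ofReal_re, Complex.ofReal_im, Complex.re_ofNat, Complex.im_ofNat]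
      nlinarith
  have hre1 : ∀ s : ℝ, 0 ≤ s → 1 ≤ (1 + Complex.I * (s:ℂ) / (2*w)).re := by
    intro s hs
    rw [Complex.add_re, Complex.one_re]
    linarith [hure s hs]
  have hunorm : ∀ s : ℝ, 0 ≤ s → ‖Complex.I * (s:ℂ) / (2*w)‖ = s / (2*‖w‖) := by
    intro s hs
    rw [norm_div, norm_mul, norm_mul, Complex.norm_I, one_mul]
    simp [Complex.norm_real, Real.norm_eq_abs, _root_.abs_of_nonneg hs]
  have hexp : (-(1/2) : ℂ) = ((-(1/2) : ℝ) : ℂ) := by norm_num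
  -- continuity of the main integrand
  have hcontf : ContinuousOn (fun s : ℝ =>
      (Real.exp (-s) : ℂ) * ((s ^ (-(1/2) : ℝ) : ℝ) : ℂ) *
        (1 + Complex.I * (s : ℂ) / (2 * w)) ^ (-(1/2) : ℂ)) (Set.Ioi 0) := by
    apply ContinuousOn.mul
    apply ContinuousOn.mul
    · exact (Complex.continuous_ofReal.comp (Real.continuous_exp.comp continuous_neg)).continuousOn
    · exact Complex.continuous_ofReal.comp_continuousOn
        (ContinuousOn.rpow_const continuousOn_id (fun s hs => Or.inl (ne_of_gt hs)))
    · apply ContinuousOn.cpow_const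
      · exact (continuous_const.add
          ((continuous_const.mul Complex.continuous_ofReal).div_const (2*w))).continuousOn
      · intro s hs
        exact Complex.mem_slitPlane_iff.mpr (Or.inl (by linarith [hre1 s (le_of_lt hs)]))
  have hif : MeasureTheory.IntegrableOn (fun s : ℝ =>
      (Real.exp (-s) : ℂ) * ((s ^ (-(1/2) : ℝ) : ℝ) : ℂ) *
        (1 + Complex.I * (s : ℂ) / (2 * w)) ^ (-(1/2) : ℂ)) (Set.Ioi 0) := by
    apply MeasureTheory.Integrable.mono' (hgamma (1/2) (by norm_num))
      (hcontf.aestronglyMeasurable measurableSet_Ioi)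
    filter_upwards [MeasureTheory.ae_restrict_mem measurableSet_Ioi] with s hs
    rw [norm_mul, norm_mul, Complex.norm_real, Complex.norm_real, Real.norm_eq_abs,
      Real.norm_eq_abs, _root_.abs_of_nonneg (Real.exp_nonneg _),
      _root_.abs_of_nonneg (Real.rpow_nonneg (le_of_lt hs) _)]
    have h1 : ‖(1 + Complex.I * (s:ℂ) / (2*w)) ^ (-(1/2) : ℂ)‖ ≤ 1 := by
      rw [hexp]
      exact norm_cpow_le_one' _ (hre1 s (le_of_lt hs)) _ (by norm_num)
    have h2 : ((1:ℝ)/2 - 1) = -(1/2 : ℝ) := by norm_num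
    rw [h2]
    calc Real.exp (-s) * s ^ (-(1/2):ℝ) * ‖_‖
        ≤ Real.exp (-s) * s ^ (-(1/2):ℝ) * 1 := by
          exact mul_le_mul_of_nonneg_left h1
            (mul_nonneg (Real.exp_nonneg _) (Real.rpow_nonneg (le_of_lt hs) _))
      _ = Real.exp (-s) * s ^ (-(1/2):ℝ) := mul_one _
  -- each term
  have hbc : ∀ j : ℕ, bcoef (-(1/2)) j
      = (∏ i ∈ Finset.range j, ((-(1/2) : ℂ) - (i : ℂ))) / (Nat.factorial j : ℂ) := by
    intro j
    simp only [bcoef]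
    norm_num
  have hterm : ∀ j : ℕ,
      MeasureTheory.IntegrableOn (fun s : ℝ =>
        (Real.exp (-s) : ℂ) * ((s ^ (-(1/2) : ℝ) : ℝ) : ℂ) *
          (bcoef (-(1/2)) j * (Complex.I * (s:ℂ) / (2*w)) ^ j)) (Set.Ioi 0) ∧
      (∫ s in Set.Ioi (0:ℝ),
        (Real.exp (-s) : ℂ) * ((s ^ (-(1/2) : ℝ) : ℝ) : ℂ) *
          (bcoef (-(1/2)) j * (Complex.I * (s:ℂ) / (2*w)) ^ j)) = c j * w ^ (-(j:ℤ)) := by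
    intro j
    have hpos : (0:ℝ) < (j:ℝ) + 1/2 := by positivity
    have heq : ∀ s ∈ Set.Ioi (0:ℝ),
        (Real.exp (-s) : ℂ) * ((s ^ (-(1/2) : ℝ) : ℝ) : ℂ) *
            (bcoef (-(1/2)) j * (Complex.I * (s:ℂ) / (2*w)) ^ j)
          = (bcoef (-(1/2)) j * (Complex.I/(2*w))^j)
            * ((Real.exp (-s) * s ^ (((j:ℝ) + 1/2) - 1) : ℝ) : ℂ) := by
      intro s hs
      have hs' : (0:ℝ) < s := hs
      have h1 : (Complex.I * (s:ℂ) / (2*w)) ^ j = (Complex.I/(2*w))^j * ((s^j : ℝ) : ℂ) := by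
        push_cast
        rw [← mul_pow]
        congr 1
        ring
      have h2 : (s ^ (-(1/2):ℝ) * s ^ j : ℝ) = s ^ (((j:ℝ) + 1/2) - 1) := by
        rw [← Real.rpow_natCast s j, ← Real.rpow_add hs']
        congr 1
        push_cast
        ring
      rw [h1]
      push_cast [← h2]
      push_cast [Real.rpow_natCast]
      ring
    have hint : MeasureTheory.IntegrableOn (fun s : ℝ =>
        (bcoef (-(1/2)) j * (Complex.I/(2*w))^j)
          * ((Real.exp (-s) * s ^ (((j:ℝ) + 1/2) - 1) : ℝ) : ℂ)) (Set.Ioi 0) :=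
      ((hgamma _ hpos).ofReal.const_mul _)
    constructor
    · exact hint.congr_fun (fun s hs => (heq s hs).symm) measurableSet_Ioi
    · rw [MeasureTheory.setIntegral_congr_fun measurableSet_Ioi heq,
        MeasureTheory.integral_const_mul, integral_ofReal'', ← Real.Gamma_eq_integral hpos]
      -- now: bcoef * (I/(2w))^j * ↑(Γ(j+1/2)) = c j * w^(-j)
      rw [hc j, ← hbc j]
      have hG : Complex.Gamma ((j : ℂ) + 1/2) = ((Real.Gamma ((j:ℝ) + 1/2) : ℝ) : ℂ) := by
        rw [show ((j : ℂ) + 1/2) = (((j:ℝ) + 1/2 : ℝ) : ℂ) by push_cast; ring,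
          Complex.Gamma_ofReal]
      rw [hG]
      have hsplit2 : (Complex.I/(2*w))^j = (Complex.I/2)^j * w ^ (-(j:ℤ)) := by
        rw [zpow_neg, zpow_natCast, ← inv_pow, ← mul_pow]
        congr 1
        field_simp
      rw [hsplit2]
      ring
  -- the difference as a single integral
  have hdiff : F w - ∑ j ∈ Finset.range (N+1), c j * w ^ (-(j:ℤ))
      = ∫ s in Set.Ioi (0:ℝ),
          ((Real.exp (-s) : ℂ) * ((s ^ (-(1/2) : ℝ) : ℝ) : ℂ) *
            ((1 + Complex.I * (s:ℂ)/(2*w)) ^ (-(1/2):ℂ)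
              - ∑ j ∈ Finset.range (N+1), bcoef (-(1/2)) j * (Complex.I * (s:ℂ)/(2*w)) ^ j)) := by
    have h1 : ∑ j ∈ Finset.range (N+1), c j * w ^ (-(j:ℤ))
        = ∫ s in Set.Ioi (0:ℝ), ∑ j ∈ Finset.range (N+1),
            (Real.exp (-s) : ℂ) * ((s ^ (-(1/2) : ℝ) : ℝ) : ℂ) *
              (bcoef (-(1/2)) j * (Complex.I * (s:ℂ) / (2*w)) ^ j) := by
      rw [MeasureTheory.integral_finset_sum _ (fun j _ => (hterm j).1)]
      exact (Finset.sum_congr rfl fun j _ => ((hterm j).2).symm)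
    rw [hF w, h1, ← MeasureTheory.integral_sub hif
      (MeasureTheory.integrable_finset_sum _ (fun j _ => (hterm j).1))]
    congr 1
    funext s
    rw [mul_sub, Finset.mul_sum]
  rw [hdiff]
  -- bound the remainder integral
  have hKnn : 0 ≤ Kc N (-(1/2)) := Kc_nonneg N _
  set KK : ℝ := Kc N (-(1/2)) / (2*‖w‖)^(N+1) with hKK
  have hKKnn : 0 ≤ KK := by positivity
  have hbound : ‖∫ s in Set.Ioi (0:ℝ),
      ((Real.exp (-s) : ℂ) * ((s ^ (-(1/2) : ℝ) : ℝ) : ℂ) *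
        ((1 + Complex.I * (s:ℂ)/(2*w)) ^ (-(1/2):ℂ)
          - ∑ j ∈ Finset.range (N+1), bcoef (-(1/2)) j * (Complex.I * (s:ℂ)/(2*w)) ^ j))‖
      ≤ ∫ s in Set.Ioi (0:ℝ), KK * (Real.exp (-s) * s ^ (((N:ℝ) + 3/2) - 1)) := by
    apply MeasureTheory.norm_integral_le_of_norm_le ((hgamma _ (by positivity)).const_mul KK)
    filter_upwards [MeasureTheory.ae_restrict_mem measurableSet_Ioi] with s hs
    have hs' : (0:ℝ) < s := hs
    rw [norm_mul, norm_mul, Complex.norm_real, Complex.norm_real, Real.norm_eq_abs,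
      Real.norm_eq_abs, _root_.abs_of_nonneg (Real.exp_nonneg _),
      _root_.abs_of_nonneg (Real.rpow_nonneg hs'.le _)]
    have hrem : ‖(1 + Complex.I * (s:ℂ)/(2*w)) ^ (-(1/2):ℂ)
        - ∑ j ∈ Finset.range (N+1), bcoef (-(1/2)) j * (Complex.I * (s:ℂ)/(2*w)) ^ j‖
        ≤ Kc N (-(1/2)) * (s/(2*‖w‖)) ^ (N+1) := by
      have := rem_bound N (-(1/2)) (by norm_num) (Complex.I * (s:ℂ)/(2*w)) (hure s hs'.le)
      rw [← hexp, hunorm s hs'.le] at this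
      exact this
    calc Real.exp (-s) * s ^ (-(1/2):ℝ) * ‖_‖
        ≤ Real.exp (-s) * s ^ (-(1/2):ℝ) * (Kc N (-(1/2)) * (s/(2*‖w‖)) ^ (N+1)) :=
          mul_le_mul_of_nonneg_left hrem
            (mul_nonneg (Real.exp_nonneg _) (Real.rpow_nonneg hs'.le _))
      _ = KK * (Real.exp (-s) * s ^ (((N:ℝ) + 3/2) - 1)) := by
          rw [div_pow, hKK]
          have h2 : s ^ (-(1/2):ℝ) * s ^ (N+1) = s ^ (((N:ℝ) + 3/2) - 1) := by
            rw [← Real.rpow_natCast s (N+1), ← Real.rpow_add hs']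
            congr 1
            push_cast
            ring
          have hden : ((2*‖w‖)^(N+1) : ℝ) ≠ 0 := by positivity
          rw [← h2]
          field_simp
  refine le_trans hbound ?_
  rw [MeasureTheory.integral_const_mul, ← Real.Gamma_eq_integral (by positivity)]
  have hzpow : ‖w‖ ^ (-(N:ℤ) - 1) = ((‖w‖ ^ (N+1))⁻¹ : ℝ) := by
    rw [show (-(N:ℤ) - 1) = -((N+1 : ℕ) : ℤ) by push_cast; ring, zpow_neg, zpow_natCast]
  rw [hzpow]
  have h2w : ((2:ℝ)^(N+1)) ≠ 0 := by positivity
  have hww : (‖w‖^(N+1) : ℝ) ≠ 0 := by positivity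
  apply le_of_eq
  rw [hKK, mul_pow]
  field_simp
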